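/- Let f : [0,∞) → [0,∞) be continuously differentiable, strictly increasing, concave, with f(0) = 0. Then for any a, b > 0, the map M ↦ area(f(M)) is continuous on the space of nonempty compact monotone subsets of [0,a] × [0,b] ⊆ ℝ² equipped with the Hausdorff distance. -/

import Mathlib

open TopologicalSpace MeasureTheory Set Metric
open scoped ENNReal

lemma mono_vol_le (A B δ : ℝ) (hA : 0 ≤ A) (hB : 0 ≤ B) (hδ : 0 ≤ δ)
    (M N : Set (ℝ × ℝ)) (hMc : IsCompact M) (hNc : IsCompact N)
    (hMsub : M ⊆ Set.Icc ((0,0) : ℝ × ℝ) (A, B)) (hNsub : N ⊆ Set.Icc ((0,0) : ℝ × ℝ) (A, B))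
    (hMmono : ∀ p ∈ M, ∀ q : ℝ × ℝ, 0 ≤ q.1 → 0 ≤ q.2 → q.1 ≤ p.1 → q.2 ≤ p.2 → q ∈ M)
    (hnear : ∀ p ∈ N, ∃ m ∈ M, dist p m ≤ δ) :
    volume N ≤ volume M + ENNReal.ofReal (δ * (A + B)) := by
  have hMm : MeasurableSet M := hMc.isClosed.measurableSet
  have hNm : MeasurableSet N := hNc.isClosed.measurableSet
  set g : ℝ → ℝ≥0∞ := fun x => volume (Prod.mk x ⁻¹' M) with hg_def
  have hg_meas : Measurable g := measurable_measure_prodMk_left hMm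
  set G : ℝ → ℝ≥0∞ := fun x => g (max x 0) with hG_def
  have hG_meas : Measurable G := hg_meas.comp (measurable_id.max measurable_const)
  -- slices of M are inside [0, B]
  have hMsl : ∀ x : ℝ, Prod.mk x ⁻¹' M ⊆ Set.Icc 0 B := by
    intro x y hy
    have h := hMsub hy
    rw [Set.mem_Icc, Prod.le_def, Prod.le_def] at h
    exact ⟨h.1.2, h.2.2⟩
  have hGB : ∀ x : ℝ, G x ≤ ENNReal.ofReal B := by
    intro x
    calc g (max x 0) ≤ volume (Set.Icc (0:ℝ) B) := measure_mono (hMsl _)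
      _ = ENNReal.ofReal B := by rw [Real.volume_Icc, sub_zero]
  -- slices of N vanish outside [0, A]
  have hNsl0 : ∀ x : ℝ, x ∉ Set.Icc (0:ℝ) A → Prod.mk x ⁻¹' N = ∅ := by
    intro x hx
    ext y
    simp only [Set.mem_preimage, Set.mem_empty_iff_false, iff_false]
    intro hy
    have h := hNsub hy
    rw [Set.mem_Icc, Prod.le_def, Prod.le_def] at h
    exact hx ⟨h.1.1, h.2.1⟩
  -- volume of N as integral of slices over [0, A]
  have hvolN : volume N = ∫⁻ x in Set.Icc (0:ℝ) A, volume (Prod.mk x ⁻¹' N) := by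
    rw [Measure.volume_eq_prod ℝ ℝ, Measure.prod_apply hNm,
      ← lintegral_indicator measurableSet_Icc]
    congr 1
    funext x
    by_cases hx : x ∈ Set.Icc (0:ℝ) A
    · simp [Set.indicator, hx]
    · simp [Set.indicator, hx, hNsl0 x hx]
  have hvolM : ∫⁻ x, g x = volume M := by
    rw [Measure.volume_eq_prod ℝ ℝ, Measure.prod_apply hMm]
  -- key slice estimate
  have hslice : ∀ x : ℝ, volume (Prod.mk x ⁻¹' N) ≤ ENNReal.ofReal δ + G (x - δ) := by
    intro x
    have hsub2 : Prod.mk x ⁻¹' N ⊆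
        Set.Icc 0 δ ∪ (fun y => y + δ) '' (Prod.mk (max (x - δ) 0) ⁻¹' M) := by
      intro y hy
      have hN := hNsub hy
      rw [Set.mem_Icc, Prod.le_def, Prod.le_def] at hN
      obtain ⟨m, hm, hdm⟩ := hnear _ hy
      rw [Prod.dist_eq] at hdm
      have h1 : |x - m.1| ≤ δ := by
        have := (le_max_left (dist x m.1) (dist y m.2)).trans hdm
        rwa [Real.dist_eq] at this
      have h2 : |y - m.2| ≤ δ := by
        have := (le_max_right (dist x m.1) (dist y m.2)).trans hdm
        rwa [Real.dist_eq] at this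
      rw [abs_le] at h1 h2
      have hm0 := hMsub hm
      rw [Set.mem_Icc, Prod.le_def, Prod.le_def] at hm0
      by_cases hyδ : y ≤ δ
      · exact Or.inl ⟨hN.1.2, hyδ⟩
      · right
        push_neg at hyδ
        refine ⟨y - δ, ?_, by ring⟩
        show (max (x - δ) 0, y - δ) ∈ M
        have h11 := h1.1
        have h22 := h2.2
        have hm11 := hm0.1.1
        exact hMmono m hm (max (x - δ) 0, y - δ) (le_max_right _ _) (by simp; linarith)
          (max_le (by linarith) hm11) (by simp; linarith)
    calc volume (Prod.mk x ⁻¹' N)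
        ≤ volume (Set.Icc (0:ℝ) δ ∪ (fun y => y + δ) '' (Prod.mk (max (x - δ) 0) ⁻¹' M)) :=
          measure_mono hsub2
      _ ≤ volume (Set.Icc (0:ℝ) δ) + volume ((fun y => y + δ) '' (Prod.mk (max (x - δ) 0) ⁻¹' M)) :=
          measure_union_le _ _
      _ = ENNReal.ofReal δ + G (x - δ) := by
          rw [Real.volume_Icc, sub_zero]
          congr 1
          have himg : (fun y => y + δ) '' (Prod.mk (max (x - δ) 0) ⁻¹' M)
              = (fun y => y + (-δ)) ⁻¹' (Prod.mk (max (x - δ) 0) ⁻¹' M) := by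
            ext y
            simp only [Set.mem_image, Set.mem_preimage]
            constructor
            · rintro ⟨z, hz, rfl⟩; simpa using hz
            · intro h; exact ⟨y + -δ, h, by ring⟩
          rw [himg, measure_preimage_add_right]
  -- shift the integral
  have hshift : ∫⁻ x in Set.Icc (0:ℝ) A, G (x - δ)
      = ∫⁻ x in Set.Icc (-δ) (A - δ), G x := by
    rw [← lintegral_indicator measurableSet_Icc, ← lintegral_indicator measurableSet_Icc]
    rw [← lintegral_add_right_eq_self
      (fun x => (Set.Icc (0:ℝ) A).indicator (fun t => G (t - δ)) x) δ]
    congr 1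
    funext x
    by_cases hx : x ∈ Set.Icc (-δ) (A - δ)
    · have hx' : x + δ ∈ Set.Icc (0:ℝ) A := ⟨by linarith [hx.1], by linarith [hx.2]⟩
      simp only [Set.indicator, hx, hx', if_true, add_sub_cancel_right]
    · have hx' : x + δ ∉ Set.Icc (0:ℝ) A := by
        intro h
        exact hx ⟨by linarith [h.1], by linarith [h.2]⟩
      simp only [Set.indicator, hx, hx', if_false]
  -- estimate the shifted integral
  have hkey : ∫⁻ x in Set.Icc (-δ) (A - δ), G x
      ≤ ENNReal.ofReal B * ENNReal.ofReal δ + volume M := by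
    have hsubI : Set.Icc (-δ) (A - δ) ⊆ Set.Icc (-δ) 0 ∪ Set.Icc 0 A := by
      intro x hx
      rcases le_total x 0 with h | h
      · exact Or.inl ⟨hx.1, h⟩
      · exact Or.inr ⟨h, hx.2.trans (by linarith)⟩
    calc ∫⁻ x in Set.Icc (-δ) (A - δ), G x
        ≤ ∫⁻ x in Set.Icc (-δ) 0 ∪ Set.Icc 0 A, G x := lintegral_mono_set hsubI
      _ ≤ (∫⁻ x in Set.Icc (-δ) 0, G x) + ∫⁻ x in Set.Icc (0:ℝ) A, G x :=
          lintegral_union_le _ _ _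
      _ ≤ ENNReal.ofReal B * ENNReal.ofReal δ + volume M := by
          gcongr
          · calc ∫⁻ x in Set.Icc (-δ) 0, G x
                ≤ ∫⁻ _ in Set.Icc (-δ) 0, ENNReal.ofReal B :=
                  lintegral_mono fun x => hGB x
              _ = ENNReal.ofReal B * volume (Set.Icc (-δ) 0) := setLIntegral_const _ _
              _ = ENNReal.ofReal B * ENNReal.ofReal δ := by
                  rw [Real.volume_Icc]; norm_num
          · calc ∫⁻ x in Set.Icc (0:ℝ) A, G x
                = ∫⁻ x in Set.Icc (0:ℝ) A, g x := by
                  refine setLIntegral_congr_fun measurableSet_Icc ?_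
                  intro x hx
                  simp only [hG_def]
                  rw [max_eq_left hx.1]
              _ ≤ ∫⁻ x, g x := setLIntegral_le_lintegral _ _
              _ = volume M := hvolM
  -- combine
  have hfinal : volume N ≤ ENNReal.ofReal δ * ENNReal.ofReal A
      + (ENNReal.ofReal B * ENNReal.ofReal δ + volume M) := by
    calc volume N = ∫⁻ x in Set.Icc (0:ℝ) A, volume (Prod.mk x ⁻¹' N) := hvolN
      _ ≤ ∫⁻ x in Set.Icc (0:ℝ) A, (ENNReal.ofReal δ + G (x - δ)) :=
          lintegral_mono fun x => hslice x
      _ = ENNReal.ofReal δ * volume (Set.Icc (0:ℝ) A)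
          + ∫⁻ x in Set.Icc (0:ℝ) A, G (x - δ) := by
          rw [lintegral_add_left measurable_const, setLIntegral_const]
      _ = ENNReal.ofReal δ * ENNReal.ofReal A + ∫⁻ x in Set.Icc (-δ) (A - δ), G x := by
          rw [Real.volume_Icc, sub_zero, hshift]
      _ ≤ ENNReal.ofReal δ * ENNReal.ofReal A
          + (ENNReal.ofReal B * ENNReal.ofReal δ + volume M) := by gcongr
  calc volume N ≤ ENNReal.ofReal δ * ENNReal.ofReal A
      + (ENNReal.ofReal B * ENNReal.ofReal δ + volume M) := hfinal
    _ = volume M + ENNReal.ofReal (δ * (A + B)) := by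
        rw [← ENNReal.ofReal_mul hδ, ← ENNReal.ofReal_mul hB, ← add_assoc,
          ← ENNReal.ofReal_add (by positivity) (by positivity),
          show δ * A + B * δ = δ * (A + B) by ring, add_comm]

lemma image_mono17 (f : ℝ → ℝ) (hf0 : f 0 = 0) (hfnn : ∀ x : ℝ, 0 ≤ x → 0 ≤ f x)
    (hfc : ContinuousOn f (Set.Ici 0)) (hmono : StrictMonoOn f (Set.Ici 0))
    {a b : ℝ} (ha : 0 ≤ a) (hb : 0 ≤ b) {K : Set (ℝ × ℝ)}
    (hKsub : K ⊆ Set.Icc ((0,0) : ℝ × ℝ) (a, b))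
    (hKmono : ∀ p ∈ K, ∀ q : ℝ × ℝ, 0 ≤ q.1 → 0 ≤ q.2 → q.1 ≤ p.1 → q.2 ≤ p.2 → q ∈ K) :
    (Prod.map f f '' K ⊆ Set.Icc ((0,0) : ℝ × ℝ) (f a, f b)) ∧
    (∀ p ∈ Prod.map f f '' K, ∀ q : ℝ × ℝ, 0 ≤ q.1 → 0 ≤ q.2 → q.1 ≤ p.1 → q.2 ≤ p.2 →
      q ∈ Prod.map f f '' K) := by
  have hmon : MonotoneOn f (Set.Ici 0) := hmono.monotoneOn
  constructor
  · rintro _ ⟨m, hm, rfl⟩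
    have hm' := hKsub hm
    rw [Set.mem_Icc, Prod.le_def, Prod.le_def] at hm'
    rw [Set.mem_Icc, Prod.le_def, Prod.le_def]
    exact ⟨⟨hfnn _ hm'.1.1, hfnn _ hm'.1.2⟩,
      ⟨hmon hm'.1.1 (Set.mem_Ici.mpr ha) hm'.2.1, hmon hm'.1.2 (Set.mem_Ici.mpr hb) hm'.2.2⟩⟩
  · rintro _ ⟨m, hm, rfl⟩ q hq1 hq2 hq3 hq4
    have hm' := hKsub hm
    rw [Set.mem_Icc, Prod.le_def, Prod.le_def] at hm'
    have hm1 : (0:ℝ) ≤ m.1 := hm'.1.1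
    have hm2 : (0:ℝ) ≤ m.2 := hm'.1.2
    have hq3' : q.1 ≤ f m.1 := hq3
    have hq4' : q.2 ≤ f m.2 := hq4
    have h1 : q.1 ∈ Set.Icc (f 0) (f m.1) := ⟨by rw [hf0]; exact hq1, hq3'⟩
    have h2 : q.2 ∈ Set.Icc (f 0) (f m.2) := ⟨by rw [hf0]; exact hq2, hq4'⟩
    obtain ⟨x, hx, hfx⟩ := intermediate_value_Icc hm1 (hfc.mono (fun t ht => ht.1)) h1
    obtain ⟨y, hy, hfy⟩ := intermediate_value_Icc hm2 (hfc.mono (fun t ht => ht.1)) h2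
    refine ⟨(x, y), hKmono m hm (x, y) hx.1 hy.1 hx.2 hy.2, ?_⟩
    simp only [Prod.map, Prod.ext_iff]
    exact ⟨hfx, hfy⟩

theorem stmt17 (f : ℝ → ℝ)
    (hf0 : f 0 = 0) (hfnn : ∀ x : ℝ, 0 ≤ x → 0 ≤ f x)
    (hC1 : ContDiffOn ℝ 1 f (Set.Ici 0))
    (hmono : StrictMonoOn f (Set.Ici 0))
    (hconc : ConcaveOn ℝ (Set.Ici 0) f)
    (a b : ℝ) (ha : 0 < a) (hb : 0 < b) :
    ContinuousOn (fun K : NonemptyCompacts (ℝ × ℝ) => volume (Prod.map f f '' (K : Set (ℝ × ℝ))))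
      {K : NonemptyCompacts (ℝ × ℝ) |
        (K : Set (ℝ × ℝ)) ⊆ Set.Icc ((0, 0) : ℝ × ℝ) (a, b) ∧
        ∀ p ∈ (K : Set (ℝ × ℝ)), ∀ q : ℝ × ℝ,
          0 ≤ q.1 → 0 ≤ q.2 → q.1 ≤ p.1 → q.2 ≤ p.2 → q ∈ (K : Set (ℝ × ℝ))} := by
  have hfc : ContinuousOn f (Set.Ici 0) := hC1.continuousOn
  set c : ℝ := max a b with hc
  have hfa : 0 ≤ f a := hfnn a ha.le
  have hfb : 0 ≤ f b := hfnn b hb.le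
  set D : ℝ := f a + f b with hD
  have hD0 : 0 ≤ D := by positivity
  have hrect : Set.Icc ((0,0) : ℝ × ℝ) (a, b) ⊆ Set.Ici 0 ×ˢ Set.Ici 0 := by
    intro p hp
    rw [Set.mem_Icc, Prod.le_def, Prod.le_def] at hp
    exact ⟨hp.1.1, hp.1.2⟩
  have hPc : ContinuousOn (Prod.map f f) (Set.Ici (0:ℝ) ×ˢ Set.Ici (0:ℝ)) := by
    have : Prod.map f f = fun p : ℝ × ℝ => (f p.1, f p.2) := rfl
    rw [this]
    exact ContinuousOn.prodMk (hfc.comp continuousOn_fst (fun p hp => hp.1))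
      (hfc.comp continuousOn_snd (fun p hp => hp.2))
  -- uniform continuity on [0, c]
  have huc : UniformContinuousOn f (Set.Icc 0 c) :=
    isCompact_Icc.uniformContinuousOn_of_continuous (hfc.mono (fun t ht => ht.1))
  rw [Metric.uniformContinuousOn_iff_le] at huc
  intro K₀ hK₀
  obtain ⟨hK₀sub, hK₀mono⟩ := hK₀
  have hFK₀c : IsCompact (Prod.map f f '' (K₀ : Set (ℝ × ℝ))) :=
    K₀.isCompact.image_of_continuousOn (hPc.mono (hK₀sub.trans hrect))
  have hne : volume (Prod.map f f '' (K₀ : Set (ℝ × ℝ))) ≠ ⊤ := hFK₀c.measure_lt_top.ne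
  rw [ContinuousWithinAt, ENNReal.tendsto_nhds hne]
  intro ε hε
  -- pick a real ε
  set e : ℝ := (min ε 1).toReal with he_def
  have hmint : min ε 1 ≠ ⊤ := ((min_le_right ε 1).trans_lt ENNReal.one_lt_top).ne
  have he0 : 0 < e := ENNReal.toReal_pos (lt_min hε zero_lt_one).ne' hmint
  have hofe : ENNReal.ofReal e ≤ ε := by
    rw [he_def, ENNReal.ofReal_toReal hmint]; exact min_le_left _ _
  set e' : ℝ := e / (D + 1) with he'_def
  have he' : 0 < e' := by positivity
  have he'D : ENNReal.ofReal (e' * D) ≤ ε := by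
    refine le_trans ?_ hofe
    apply ENNReal.ofReal_le_ofReal
    have h1 : e' * D ≤ e' * (D + 1) := by nlinarith [he'.le]
    rwa [he'_def, div_mul_cancel₀ e (by linarith : D + 1 ≠ 0)] at h1
  obtain ⟨η, hη, hucη⟩ := huc e' he'
  filter_upwards [mem_nhdsWithin_of_mem_nhds (Metric.ball_mem_nhds K₀ hη),
    self_mem_nhdsWithin] with K hKball hKmem
  obtain ⟨hKsub, hKmono⟩ := hKmem
  have hdist : hausdorffDist (K : Set (ℝ × ℝ)) (K₀ : Set (ℝ × ℝ)) < η := by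
    rw [← NonemptyCompacts.dist_eq]
    exact mem_ball.mp hKball
  have hfin : EMetric.hausdorffEdist (K : Set (ℝ × ℝ)) (K₀ : Set (ℝ × ℝ)) ≠ ⊤ :=
    hausdorffEdist_ne_top_of_nonempty_of_bounded K.nonempty K₀.nonempty
      K.isCompact.isBounded K₀.isCompact.isBounded
  have hnear1 : ∀ p ∈ (K : Set (ℝ × ℝ)), ∃ m ∈ (K₀ : Set (ℝ × ℝ)), dist p m ≤ η := by
    intro p hp
    obtain ⟨m, hm, hpm⟩ := exists_dist_lt_of_hausdorffDist_lt hp hdist hfin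
    exact ⟨m, hm, hpm.le⟩
  have hnear2 : ∀ p ∈ (K₀ : Set (ℝ × ℝ)), ∃ m ∈ (K : Set (ℝ × ℝ)), dist p m ≤ η := by
    intro p hp
    obtain ⟨m, hm, hpm⟩ := exists_dist_lt_of_hausdorffDist_lt' hp hdist hfin
    exact ⟨m, hm, (dist_comm p m ▸ hpm.le : dist p m ≤ η)⟩
  -- nearness of the images
  have himg : ∀ S T : Set (ℝ × ℝ), S ⊆ Set.Icc ((0,0) : ℝ × ℝ) (a, b) →
      T ⊆ Set.Icc ((0,0) : ℝ × ℝ) (a, b) →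
      (∀ p ∈ S, ∃ m ∈ T, dist p m ≤ η) →
      ∀ P ∈ Prod.map f f '' S, ∃ Q ∈ Prod.map f f '' T, dist P Q ≤ e' := by
    rintro S T hS hT hnearST _ ⟨p, hp, rfl⟩
    obtain ⟨m, hm, hpm⟩ := hnearST p hp
    refine ⟨Prod.map f f m, Set.mem_image_of_mem _ hm, ?_⟩
    have hp' := hS hp
    have hm' := hT hm
    rw [Set.mem_Icc, Prod.le_def, Prod.le_def] at hp' hm'
    rw [Prod.dist_eq] at hpm
    have d1 : dist p.1 m.1 ≤ η := le_trans (le_max_left _ _) hpm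
    have d2 : dist p.2 m.2 ≤ η := le_trans (le_max_right _ _) hpm
    have m1 : dist (f p.1) (f m.1) ≤ e' :=
      hucη p.1 ⟨hp'.1.1, le_trans hp'.2.1 (le_max_left a b)⟩
        m.1 ⟨hm'.1.1, le_trans hm'.2.1 (le_max_left a b)⟩ d1
    have m2 : dist (f p.2) (f m.2) ≤ e' :=
      hucη p.2 ⟨hp'.1.2, le_trans hp'.2.2 (le_max_right a b)⟩
        m.2 ⟨hm'.1.2, le_trans hm'.2.2 (le_max_right a b)⟩ d2
    rw [Prod.dist_eq]
    exact max_le m1 m2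
  -- apply the geometric lemma in both directions
  have hFKc : IsCompact (Prod.map f f '' (K : Set (ℝ × ℝ))) :=
    K.isCompact.image_of_continuousOn (hPc.mono (hKsub.trans hrect))
  obtain ⟨hFKsub, hFKmono⟩ := image_mono17 f hf0 hfnn hfc hmono ha.le hb.le hKsub hKmono
  obtain ⟨hFK₀sub, hFK₀mono⟩ := image_mono17 f hf0 hfnn hfc hmono ha.le hb.le hK₀sub hK₀mono
  have hub : volume (Prod.map f f '' (K : Set (ℝ × ℝ)))
      ≤ volume (Prod.map f f '' (K₀ : Set (ℝ × ℝ))) + ENNReal.ofReal (e' * D) :=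
    mono_vol_le (f a) (f b) e' hfa hfb he'.le _ _ hFK₀c hFKc hFK₀sub hFKsub hFK₀mono
      (himg _ _ hKsub hK₀sub hnear1)
  have hlb : volume (Prod.map f f '' (K₀ : Set (ℝ × ℝ)))
      ≤ volume (Prod.map f f '' (K : Set (ℝ × ℝ))) + ENNReal.ofReal (e' * D) :=
    mono_vol_le (f a) (f b) e' hfa hfb he'.le _ _ hFKc hFK₀c hFKsub hFK₀sub hFKmono
      (himg _ _ hK₀sub hKsub hnear2)
  constructor
  · exact tsub_le_iff_right.mpr (hlb.trans (add_le_add_right he'D _))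
  · exact hub.trans (add_le_add_right he'D _)
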